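/- arXiv:2509.21936 — 2 statements merged into one kernel-verified Lean document; each statement's English description precedes it below -/
import Mathlib

section
/- Let f(L) = E[max_{ℓ≤L} χ_ℓ] where χ ~ N(0, I_L). In the max-SLR model at ν = ∞ with deterministic length L, the minimal population risk of linear attention equals 1 − (1 + f(L)²)/L, and since f(L) = O(√(log L)), this risk is 1 − O((log L)/L) as L → ∞. -/
open MeasureTheory ProbabilityTheory Real Filter Asymptotics

noncomputable def stdGaussian (L : ℕ) : Measure (Fin L → ℝ) :=
  Measure.pi fun _ => gaussianReal 0 1

/-- `f(L) = E[max_{ℓ ≤ L} χ_ℓ]` for `χ ~ N(0, I_L)`. -/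
noncomputable def fmax (L : ℕ) : ℝ :=
  ∫ χ, (⨆ ℓ : Fin L, χ ℓ) ∂stdGaussian L

/-- Max-SLR weight at `ν = ∞`: `g(ε,χ) = L·1{ε = argmax χ}`. -/
noncomputable def gMax (L : ℕ) (ε : Fin L) (χ : Fin L → ℝ) : ℝ :=
  if ∀ ℓ, ℓ ≠ ε → χ ℓ < χ ε then (L : ℝ) else 0

/-- Population risk of linear attention on max-SLR at `ν = ∞`, on the manifold. -/
noncomputable def linRiskMax (L : ℕ) (mk mv Rk Rv : ℝ) : ℝ :=
  (L : ℝ)⁻¹ * ∑ ε : Fin L, ∫ χ, ∫ ξ, ∫ z, ∫ ζ,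
    gMax L ε χ *
      (z ε - ∑ ℓ, (mv * z ℓ + Rv * ζ ℓ) * (1 + mk * χ ℓ + Rk * ξ ℓ)) ^ 2
    ∂stdGaussian L ∂stdGaussian L ∂stdGaussian L ∂stdGaussian L

open scoped ENNReal NNReal

noncomputable def gphi (x : ℝ) : ℝ := (Real.sqrt (2 * π))⁻¹ * Real.exp (- x ^ 2 / 2)

lemma gphi_eq : gphi = gaussianPDFReal 0 1 := by
  funext x; simp [gphi, gaussianPDFReal]

lemma measurable_gphi : Measurable gphi := by
  rw [gphi_eq]; exact measurable_gaussianPDFReal 0 1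

lemma gphi_nonneg (x : ℝ) : 0 ≤ gphi x := by
  rw [gphi_eq]; exact gaussianPDFReal_nonneg 0 1 x

lemma gaussianReal_eq : gaussianReal 0 1
    = (volume : Measure ℝ).withDensity (fun x => ((gphi x).toNNReal : ℝ≥0∞)) := by
  rw [gaussianReal_of_var_ne_zero 0 one_ne_zero]
  congr 1
  funext x
  rw [gaussianPDF, ← gphi_eq, ENNReal.ofReal]

lemma integral_gaussian1 (f : ℝ → ℝ) :
    ∫ x, f x ∂gaussianReal 0 1 = ∫ x, gphi x * f x := by
  rw [gaussianReal_eq, integral_withDensity_eq_integral_smul (measurable_gphi.real_toNNReal) f]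
  congr 1; funext x
  simp [NNReal.smul_def, Real.coe_toNNReal _ (gphi_nonneg x)]

lemma integrable_gaussian1_iff (f : ℝ → ℝ) :
    Integrable f (gaussianReal 0 1) ↔ Integrable (fun x => gphi x * f x) volume := by
  rw [gaussianReal_eq, integrable_withDensity_iff_integrable_smul measurable_gphi.real_toNNReal]
  constructor <;> intro h <;> [skip; skip] <;>
  · refine h.congr (Filter.Eventually.of_forall fun x => ?_)
    simp [NNReal.smul_def, Real.coe_toNNReal _ (gphi_nonneg x)]

lemma integral_neg_comp (g : ℝ → ℝ) : ∫ x, g (-x) = ∫ x, g x := by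
  have A : MeasurableEmbedding (fun x : ℝ => -x) :=
    (Homeomorph.neg ℝ).isClosedEmbedding.measurableEmbedding
  rw [← A.integral_map, Measure.map_neg_eq_self]

lemma integrable_gphi_id : Integrable (fun x => gphi x * x) volume := by
  have h := (integrable_mul_exp_neg_mul_sq (b := 1/2) (by norm_num)).const_mul
    ((Real.sqrt (2 * π))⁻¹)
  refine h.congr (Filter.Eventually.of_forall fun x => ?_)
  simp only [gphi]
  ring_nf

lemma integral_gphi_id : ∫ x, gphi x * x = 0 := by
  have h := integral_neg_comp (fun x => gphi x * x)
  have he : ∀ x : ℝ, gphi (-x) = gphi x := fun x => by simp [gphi]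
  have h2 : ∫ x, gphi x * (-x) = ∫ x, gphi x * x := by
    simpa [he] using h
  have h3 : (∫ x, gphi x * (-x)) = - ∫ x, gphi x * x := by
    rw [← integral_neg]; congr 1; funext x; ring
  rw [h3] at h2
  linarith

lemma integrable_gphi_sq : Integrable (fun x => gphi x * x ^ 2) volume := by
  have h := (integrable_rpow_mul_exp_neg_mul_sq (b := 1/2) (by norm_num)
    (s := 2) (by norm_num)).const_mul ((Real.sqrt (2 * π))⁻¹)
  refine h.congr (Filter.Eventually.of_forall fun x => ?_)
  simp only [gphi]
  rw [show ((2:ℝ) : ℝ) = ((2:ℕ):ℝ) by norm_num, Real.rpow_natCast]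
  ring_nf

lemma integral_sq_exp : ∫ x : ℝ, x ^ 2 * Real.exp (- x ^ 2 / 2) = Real.sqrt (2 * π) := by
  have heven : ∀ x : ℝ, |x| ^ 2 * Real.exp (- |x| ^ 2 / 2) = x ^ 2 * Real.exp (- x ^ 2 / 2) := by
    intro x; rw [sq_abs]
  have h1 : ∫ x : ℝ, x ^ 2 * Real.exp (- x ^ 2 / 2)
      = 2 * ∫ x in Set.Ioi (0:ℝ), x ^ 2 * Real.exp (- x ^ 2 / 2) := by
    rw [← integral_comp_abs (f := fun x => x ^ 2 * Real.exp (- x ^ 2 / 2))]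
    congr 1; funext x; exact (heven x).symm
  have h2 : ∫ x in Set.Ioi (0:ℝ), x ^ 2 * Real.exp (- x ^ 2 / 2)
      = (1/2:ℝ) ^ (-(3:ℝ)/2) * (1/2) * Real.Gamma (3/2) := by
    have := integral_rpow_mul_exp_neg_mul_rpow (p := 2) (q := 2) (b := 1/2)
      (by norm_num) (by norm_num) (by norm_num)
    rw [show ((2:ℝ) + 1)/2 = 3/2 by norm_num, show (-((2:ℝ)+1))/2 = -(3:ℝ)/2 by norm_num] at this
    rw [← this]
    refine setIntegral_congr_fun measurableSet_Ioi (fun x _ => ?_)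
    rw [show ((2:ℝ) : ℝ) = ((2:ℕ):ℝ) by norm_num, Real.rpow_natCast]
    ring_nf
  have hg : Real.Gamma (3/2) = Real.sqrt π / 2 := by
    rw [show (3:ℝ)/2 = 1/2 + 1 by norm_num, Real.Gamma_add_one (by norm_num),
      Real.Gamma_one_half_eq]
    ring
  have hpow : (1/2:ℝ) ^ (-(3:ℝ)/2) = 2 * Real.sqrt 2 := by
    have e1 : (2:ℝ) ^ ((3:ℝ)/2) = 2 * Real.sqrt 2 := by
      rw [Real.sqrt_eq_rpow, show (3:ℝ)/2 = 1 + 1/2 by norm_num,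
        Real.rpow_add (by norm_num), Real.rpow_one]
    rw [show (1/2:ℝ) = 2⁻¹ by norm_num, Real.inv_rpow (by norm_num),
      ← Real.rpow_neg (by norm_num), show (-(-(3:ℝ)/2)) = (3:ℝ)/2 by norm_num, e1]
  rw [h1, h2, hg, hpow, Real.sqrt_mul (by norm_num : (0:ℝ) ≤ 2)]
  ring

lemma integral_gphi_sq : ∫ x, gphi x * x ^ 2 = 1 := by
  have h : ∫ x, gphi x * x ^ 2 = (Real.sqrt (2*π))⁻¹ * ∫ x : ℝ, x ^ 2 * Real.exp (- x ^ 2 / 2) := by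
    rw [← integral_const_mul]
    congr 1; funext x; simp only [gphi]; ring
  rw [h, integral_sq_exp, inv_mul_cancel₀]
  positivity

lemma gphi_mul_exp (t x : ℝ) :
    gphi x * Real.exp (t * x) = Real.exp (t ^ 2 / 2) * gaussianPDFReal t 1 x := by
  simp only [gphi, gaussianPDFReal]
  rw [NNReal.coe_one, mul_one]
  rw [mul_comm (Real.exp (t^2/2)), mul_assoc, mul_assoc, ← Real.exp_add, ← Real.exp_add]
  congr 1
  ring

lemma integrable_gphi_exp (t : ℝ) : Integrable (fun x => gphi x * Real.exp (t * x)) volume := by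
  have := (integrable_gaussianPDFReal t 1).const_mul (Real.exp (t ^ 2 / 2))
  exact this.congr (Filter.Eventually.of_forall fun x => (gphi_mul_exp t x).symm)

lemma integral_gphi_exp (t : ℝ) : ∫ x, gphi x * Real.exp (t * x) = Real.exp (t ^ 2 / 2) := by
  calc ∫ x, gphi x * Real.exp (t * x)
      = ∫ x, Real.exp (t ^ 2 / 2) * gaussianPDFReal t 1 x := by
        congr 1; funext x; exact gphi_mul_exp t x
    _ = Real.exp (t ^ 2 / 2) := by
        rw [integral_const_mul, integral_gaussianPDFReal_eq_one t one_ne_zero, mul_one]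

/-! Packaged one-dimensional facts. -/

noncomputable abbrev gR : Measure ℝ := gaussianReal 0 1

lemma g_int_id : Integrable (fun x => x) gR :=
  (integrable_gaussian1_iff _).2 integrable_gphi_id

lemma g_integral_id : ∫ x, x ∂gR = 0 := by
  rw [integral_gaussian1]; exact integral_gphi_id

lemma g_int_sq : Integrable (fun x => x ^ 2) gR :=
  (integrable_gaussian1_iff _).2 integrable_gphi_sq

lemma g_integral_sq : ∫ x, x ^ 2 ∂gR = 1 := by
  rw [integral_gaussian1]; exact integral_gphi_sq

lemma g_int_exp (t : ℝ) : Integrable (fun x => Real.exp (t * x)) gR :=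
  (integrable_gaussian1_iff _).2 (integrable_gphi_exp t)

lemma g_integral_exp (t : ℝ) : ∫ x, Real.exp (t * x) ∂gR = Real.exp (t ^ 2 / 2) := by
  rw [integral_gaussian1]; exact integral_gphi_exp t

section PiProd
open Fintype

lemma integrable_pi_prod : ∀ {n : ℕ} (μ : Fin n → Measure ℝ)
    [∀ i, IsProbabilityMeasure (μ i)] {f : Fin n → ℝ → ℝ},
    (∀ i, Integrable (f i) (μ i)) →
    Integrable (fun (x : Fin n → ℝ) => ∏ i, f i (x i)) (Measure.pi μ) := by
  intro n
  induction n with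
  | zero =>
      intro μ _ f hf
      simp only [Finset.univ_eq_empty, Finset.prod_empty]
      exact integrable_const 1
  | succ n n_ih =>
      intro μ _ f hf
      have hmp := ((measurePreserving_piFinSuccAbove μ 0).symm)
      rw [← hmp.integrable_comp_emb (MeasurableEquiv.measurableEmbedding _)]
      simp_rw [MeasurableEquiv.piFinSuccAbove_symm_apply, Fin.insertNthEquiv,
        Fin.prod_univ_succ, Fin.insertNth_zero]
      simp only [Fin.zero_succAbove, Function.comp_def, Equiv.coe_fn_mk,
        Fin.cons_zero, Fin.cons_succ]
      have h2 : Integrable (fun (x : Fin n → ℝ) => ∏ j, f (Fin.succ j) (x j))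
          (Measure.pi fun j => μ (Fin.succ j)) := n_ih _ (fun i => hf _)
      exact Integrable.mul_prod (hf 0) h2

lemma integral_pi_prod : ∀ {n : ℕ} (μ : Fin n → Measure ℝ)
    [∀ i, IsProbabilityMeasure (μ i)] (f : Fin n → ℝ → ℝ),
    ∫ x : Fin n → ℝ, ∏ i, f i (x i) ∂Measure.pi μ = ∏ i, ∫ x, f i x ∂μ i := by
  intro n
  induction n with
  | zero =>
      intro μ _ f
      simp only [Finset.univ_eq_empty, Finset.prod_empty, integral_const]
      simp
  | succ n n_ih =>
      intro μ _ f
      calc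
        _ = ∫ p : ℝ × (Fin n → ℝ),
            f 0 p.1 * ∏ i : Fin n, f (Fin.succ i) (p.2 i)
            ∂((μ 0).prod (Measure.pi fun j => μ (Fin.succ j))) := by
          rw [← ((measurePreserving_piFinSuccAbove μ 0).symm).integral_comp']
          simp_rw [MeasurableEquiv.piFinSuccAbove_symm_apply, Fin.insertNthEquiv,
            Fin.prod_univ_succ, Fin.insertNth_zero, Equiv.coe_fn_mk, Fin.cons_succ,
            Fin.zero_succAbove, Fin.cons_zero]
          simp [cast_eq]
        _ = (∫ x, f 0 x ∂μ 0) * ∏ i : Fin n, ∫ x, f (Fin.succ i) x ∂μ (Fin.succ i) := by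
          rw [← n_ih, ← integral_prod_mul]
        _ = ∏ i, ∫ x, f i x ∂μ i := by rw [Fin.prod_univ_succ]

end PiProd

lemma stdGaussian_eq (L : ℕ) : stdGaussian L = Measure.pi (fun _ : Fin L => gR) := rfl

instance (L : ℕ) : IsProbabilityMeasure (stdGaussian L) := by
  rw [stdGaussian_eq]; infer_instance

section Coord
variable {L : ℕ} (ℓ m : Fin L)

lemma pi_int_eval : Integrable (fun x : Fin L → ℝ => x ℓ) (stdGaussian L) := by
  rw [stdGaussian_eq]
  have h := integrable_pi_prod (fun _ : Fin L => gR)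
    (f := fun i t => if i = ℓ then t else (1:ℝ)) (fun i => ?_)
  · refine h.congr (Filter.Eventually.of_forall fun x => ?_)
    simp
  · by_cases hi : i = ℓ
    · simpa [hi] using g_int_id
    · simpa [hi] using (integrable_const (1:ℝ))

lemma pi_integral_eval : ∫ x : Fin L → ℝ, x ℓ ∂stdGaussian L = 0 := by
  rw [stdGaussian_eq]
  have h := integral_pi_prod (fun _ : Fin L => gR)
    (fun i t => if i = ℓ then t else (1:ℝ))
  have e : ∀ x : Fin L → ℝ, (∏ i, if i = ℓ then x i else (1:ℝ)) = x ℓ := by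
    intro x; simp
  rw [show (fun x : Fin L → ℝ => x ℓ) = fun x => ∏ i, if i = ℓ then x i else (1:ℝ) from
    funext fun x => (e x).symm]
  rw [h, Finset.prod_eq_zero (Finset.mem_univ ℓ)]
  simp [g_integral_id]

lemma pi_int_eval_mul : Integrable (fun x : Fin L → ℝ => x ℓ * x m) (stdGaussian L) := by
  rw [stdGaussian_eq]
  have h := integrable_pi_prod (fun _ : Fin L => gR)
    (f := fun i t => (if i = ℓ then t else (1:ℝ)) * (if i = m then t else (1:ℝ)))
    (fun i => ?_)
  · refine h.congr (Filter.Eventually.of_forall fun x => ?_)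
    show (∏ i, (if i = ℓ then x i else 1) * (if i = m then x i else 1)) = x ℓ * x m
    rw [Finset.prod_mul_distrib]
    simp
  · by_cases h1 : i = ℓ
    · subst h1
      by_cases h2 : i = m
      · subst h2
        refine (g_int_sq.congr (Filter.Eventually.of_forall fun t => ?_))
        simp [sq]
      · simpa [h2] using g_int_id
    · by_cases h2 : i = m
      · subst h2
        simpa [h1] using g_int_id
      · simpa [h1, h2] using (integrable_const (1:ℝ))

lemma pi_integral_eval_mul :
    ∫ x : Fin L → ℝ, x ℓ * x m ∂stdGaussian L = if ℓ = m then 1 else 0 := by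
  rw [stdGaussian_eq]
  have e : ∀ x : Fin L → ℝ,
      (∏ i, (if i = ℓ then x i else (1:ℝ)) * (if i = m then x i else (1:ℝ))) = x ℓ * x m := by
    intro x; rw [Finset.prod_mul_distrib]; simp
  rw [show (fun x : Fin L → ℝ => x ℓ * x m)
      = fun x => ∏ i, (if i = ℓ then x i else (1:ℝ)) * (if i = m then x i else (1:ℝ)) from
    funext fun x => (e x).symm]
  have hip := integral_pi_prod (fun _ : Fin L => gR)
    (fun i u => (if i = ℓ then u else (1:ℝ)) * (if i = m then u else (1:ℝ)))
  rw [hip]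
  by_cases hlm : ℓ = m
  · subst hlm
    rw [if_pos rfl]
    refine Finset.prod_eq_one (fun i _ => ?_)
    by_cases h1 : i = ℓ
    · subst h1
      simp only [if_pos rfl]
      simpa [← pow_two] using g_integral_sq
    · simp [h1]
  · rw [if_neg hlm]
    refine Finset.prod_eq_zero (Finset.mem_univ ℓ) ?_
    simp only [if_pos rfl, if_neg (fun h => hlm h)]
    simpa using g_integral_id

lemma pi_int_exp (t : ℝ) :
    Integrable (fun x : Fin L → ℝ => Real.exp (t * x ℓ)) (stdGaussian L) := by
  rw [stdGaussian_eq]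
  have h := integrable_pi_prod (fun _ : Fin L => gR)
    (f := fun i u => if i = ℓ then Real.exp (t * u) else (1:ℝ)) (fun i => ?_)
  · refine h.congr (Filter.Eventually.of_forall fun x => ?_)
    simp
  · by_cases hi : i = ℓ
    · simpa [hi] using g_int_exp t
    · simpa [hi] using (integrable_const (1:ℝ))

lemma pi_integral_exp (t : ℝ) :
    ∫ x : Fin L → ℝ, Real.exp (t * x ℓ) ∂stdGaussian L = Real.exp (t ^ 2 / 2) := by
  rw [stdGaussian_eq]
  have e : ∀ x : Fin L → ℝ, (∏ i, if i = ℓ then Real.exp (t * x i) else (1:ℝ))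
      = Real.exp (t * x ℓ) := by intro x; simp
  rw [show (fun x : Fin L → ℝ => Real.exp (t * x ℓ))
      = fun x => ∏ i, if i = ℓ then Real.exp (t * x i) else (1:ℝ) from
    funext fun x => (e x).symm]
  have hip := integral_pi_prod (fun _ : Fin L => gR)
    (fun i u => if i = ℓ then Real.exp (t * u) else (1:ℝ))
  rw [hip]
  rw [Finset.prod_eq_single ℓ (fun i _ hi => by simp [hi]) (by simp)]
  simp [g_integral_exp t]

end Coord

section LinQuad
variable {L : ℕ}

lemma sum_eval_int (a : Fin L → ℝ) :
    Integrable (fun x : Fin L → ℝ => ∑ ℓ, a ℓ * x ℓ) (stdGaussian L) :=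
  integrable_finset_sum _ fun ℓ _ => (pi_int_eval ℓ).const_mul (a ℓ)

lemma sum_eval_integral (a : Fin L → ℝ) :
    ∫ x : Fin L → ℝ, (∑ ℓ, a ℓ * x ℓ) ∂stdGaussian L = 0 := by
  rw [integral_finset_sum _ fun ℓ _ => (pi_int_eval ℓ).const_mul (a ℓ)]
  refine Finset.sum_eq_zero fun ℓ _ => ?_
  rw [integral_const_mul, pi_integral_eval, mul_zero]

lemma sq_expand (c : ℝ) (a x : Fin L → ℝ) :
    (c + ∑ ℓ, a ℓ * x ℓ)^2
      = (c^2 + ∑ ℓ, (2*c*a ℓ) * x ℓ) + ∑ ℓ, ∑ m, (a ℓ * a m) * (x ℓ * x m) := by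
  have h1 : (∑ ℓ, a ℓ * x ℓ) * (∑ m, a m * x m) = ∑ ℓ, ∑ m, (a ℓ * a m) * (x ℓ * x m) := by
    rw [Finset.sum_mul_sum]
    exact Finset.sum_congr rfl fun ℓ _ => Finset.sum_congr rfl fun m _ => by ring
  have h2 : (∑ ℓ, (2*c*a ℓ) * x ℓ) = 2*c*(∑ ℓ, a ℓ * x ℓ) := by
    rw [Finset.mul_sum]
    exact Finset.sum_congr rfl fun ℓ _ => by ring
  rw [h2, ← h1]; ring

lemma quad_int (c : ℝ) (a : Fin L → ℝ) :
    Integrable (fun x : Fin L → ℝ => (c + ∑ ℓ, a ℓ * x ℓ)^2) (stdGaussian L) := by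
  rw [show (fun x : Fin L → ℝ => (c + ∑ ℓ, a ℓ * x ℓ)^2)
      = fun x => (c^2 + ∑ ℓ, (2*c*a ℓ) * x ℓ) + ∑ ℓ, ∑ m, (a ℓ * a m) * (x ℓ * x m) from
    funext fun x => sq_expand c a x]
  exact ((integrable_const _).add (sum_eval_int _)).add
    (integrable_finset_sum _ fun ℓ _ => integrable_finset_sum _ fun m _ =>
      (pi_int_eval_mul ℓ m).const_mul _)

lemma quad_integral (c : ℝ) (a : Fin L → ℝ) :
    ∫ x : Fin L → ℝ, (c + ∑ ℓ, a ℓ * x ℓ)^2 ∂stdGaussian L = c^2 + ∑ ℓ, (a ℓ)^2 := by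
  rw [show (fun x : Fin L → ℝ => (c + ∑ ℓ, a ℓ * x ℓ)^2)
      = fun x => (c^2 + ∑ ℓ, (2*c*a ℓ) * x ℓ) + ∑ ℓ, ∑ m, (a ℓ * a m) * (x ℓ * x m) from
    funext fun x => sq_expand c a x]
  have h1 : Integrable (fun x : Fin L → ℝ => c^2 + ∑ ℓ, (2*c*a ℓ) * x ℓ) (stdGaussian L) :=
    (integrable_const _).add (sum_eval_int _)
  have h2 : Integrable (fun x : Fin L → ℝ => ∑ ℓ, ∑ m, (a ℓ * a m) * (x ℓ * x m))
      (stdGaussian L) :=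
    integrable_finset_sum _ fun ℓ _ => integrable_finset_sum _ fun m _ =>
      (pi_int_eval_mul ℓ m).const_mul _
  have hadd := integral_add h1 h2
  rw [hadd, integral_add (integrable_const _) (sum_eval_int _), sum_eval_integral,
    integral_const]
  have h3 : ∫ x : Fin L → ℝ, (∑ ℓ, ∑ m, (a ℓ * a m) * (x ℓ * x m)) ∂stdGaussian L
      = ∑ ℓ, (a ℓ)^2 := by
    rw [integral_finset_sum _ fun ℓ _ => integrable_finset_sum _ fun m _ =>
      (pi_int_eval_mul ℓ m).const_mul _]
    refine Finset.sum_congr rfl fun ℓ _ => ?_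
    rw [integral_finset_sum _ fun m _ => (pi_int_eval_mul ℓ m).const_mul _]
    have : ∀ m, m ∈ Finset.univ → (∫ x : Fin L → ℝ, (a ℓ * a m) * (x ℓ * x m) ∂stdGaussian L)
        = if ℓ = m then (a ℓ)^2 else 0 := by
      intro m _
      rw [integral_const_mul, pi_integral_eval_mul]
      by_cases h : ℓ = m
      · subst h; simp [sq]
      · simp [h]
    rw [Finset.sum_congr rfl this]
    simp
  rw [h3]
  simp

lemma single_coord_eq (c r : ℝ) (ℓ : Fin L) (x : Fin L → ℝ) :
    c + r * x ℓ = c + ∑ m, (if m = ℓ then r else 0) * x m := by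
  congr 1
  simp [ite_mul]

lemma quad_single_int (c r : ℝ) (ℓ : Fin L) :
    Integrable (fun x : Fin L → ℝ => (c + r * x ℓ)^2) (stdGaussian L) := by
  simp_rw [single_coord_eq c r ℓ]
  exact quad_int c _

lemma quad_single_integral (c r : ℝ) (ℓ : Fin L) :
    ∫ x : Fin L → ℝ, (c + r * x ℓ)^2 ∂stdGaussian L = c^2 + r^2 := by
  simp_rw [single_coord_eq c r ℓ]
  rw [quad_integral]
  congr 1
  have h : ∀ m : Fin L, ((if m = ℓ then r else (0:ℝ)))^2 = if m = ℓ then r^2 else 0 :=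
    fun m => by split <;> simp
  rw [Finset.sum_congr rfl fun m _ => h m]
  simp

end LinQuad

section Steps
variable {L : ℕ}

lemma step1 (g mv Rv : ℝ) (A z : Fin L → ℝ) (ε : Fin L) :
    ∫ ζ, g * (z ε - ∑ ℓ, (mv * z ℓ + Rv * ζ ℓ) * A ℓ)^2 ∂stdGaussian L
      = g * ((z ε - ∑ ℓ, mv * z ℓ * A ℓ)^2 + Rv^2 * ∑ ℓ, (A ℓ)^2) := by
  set C := z ε - ∑ ℓ, mv * z ℓ * A ℓ with hC
  have hpt : ∀ ζ : Fin L → ℝ,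
      z ε - ∑ ℓ, (mv * z ℓ + Rv * ζ ℓ) * A ℓ = C + ∑ ℓ, (-(Rv * A ℓ)) * ζ ℓ := by
    intro ζ
    have hsum : ∑ ℓ, (mv * z ℓ + Rv * ζ ℓ) * A ℓ
        = (∑ ℓ, mv * z ℓ * A ℓ) + ∑ ℓ, (Rv * A ℓ) * ζ ℓ := by
      rw [← Finset.sum_add_distrib]
      exact Finset.sum_congr rfl fun ℓ _ => by ring
    rw [hsum, hC]
    rw [show ∑ ℓ, (-(Rv * A ℓ)) * ζ ℓ = -∑ ℓ, (Rv * A ℓ) * ζ ℓ by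
      rw [← Finset.sum_neg_distrib]; exact Finset.sum_congr rfl fun ℓ _ => by ring]
    ring
  calc ∫ ζ, g * (z ε - ∑ ℓ, (mv * z ℓ + Rv * ζ ℓ) * A ℓ)^2 ∂stdGaussian L
      = ∫ ζ, g * (C + ∑ ℓ, (-(Rv * A ℓ)) * ζ ℓ)^2 ∂stdGaussian L := by
        congr 1; funext ζ; rw [hpt ζ]
    _ = g * (C^2 + ∑ ℓ, (-(Rv * A ℓ))^2) := by rw [integral_const_mul, quad_integral]
    _ = g * (C^2 + Rv^2 * ∑ ℓ, (A ℓ)^2) := by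
        rw [Finset.mul_sum]
        congr 2
        exact Finset.sum_congr rfl fun ℓ _ => by ring

lemma step2 (g mv K : ℝ) (A : Fin L → ℝ) (ε : Fin L) :
    ∫ z, g * ((z ε - ∑ ℓ, mv * z ℓ * A ℓ)^2 + K) ∂stdGaussian L
      = g * (1 - 2*mv*A ε + mv^2 * (∑ ℓ, (A ℓ)^2) + K) := by
  set b : Fin L → ℝ := fun ℓ => (if ℓ = ε then (1:ℝ) else 0) - mv * A ℓ with hb
  have hpt : ∀ z' : Fin L → ℝ, z' ε - ∑ ℓ, mv * z' ℓ * A ℓ = 0 + ∑ ℓ, b ℓ * z' ℓ := by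
    intro z'
    have : ∑ ℓ, b ℓ * z' ℓ
        = (∑ ℓ, (if ℓ = ε then (1:ℝ) else 0) * z' ℓ) - ∑ ℓ, mv * z' ℓ * A ℓ := by
      rw [← Finset.sum_sub_distrib]
      exact Finset.sum_congr rfl fun ℓ _ => by rw [hb]; ring
    rw [this]
    simp [ite_mul]
  have hb2 : ∀ ℓ, (b ℓ)^2 = (if ℓ = ε then 1 - 2*mv*A ℓ else 0) + mv^2 * (A ℓ)^2 := by
    intro ℓ
    rw [hb]
    by_cases h : ℓ = ε <;> simp [h] <;> ring
  have hsumb : ∑ ℓ, (b ℓ)^2 = 1 - 2*mv*A ε + mv^2 * ∑ ℓ, (A ℓ)^2 := by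
    rw [Finset.sum_congr rfl fun ℓ _ => hb2 ℓ, Finset.sum_add_distrib]
    rw [Finset.sum_ite_eq' Finset.univ ε (fun ℓ => 1 - 2*mv*A ℓ)]
    simp [Finset.mul_sum]
  calc ∫ z, g * ((z ε - ∑ ℓ, mv * z ℓ * A ℓ)^2 + K) ∂stdGaussian L
      = ∫ z, g * ((0 + ∑ ℓ, b ℓ * z ℓ)^2 + K) ∂stdGaussian L := by
        congr 1; funext z; rw [hpt z]
    _ = g * ((∫ z, (0 + ∑ ℓ, b ℓ * z ℓ)^2 ∂stdGaussian L) + K) := by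
        rw [integral_const_mul, integral_add (quad_int 0 b) (integrable_const K),
          integral_const]
        simp
    _ = g * (1 - 2*mv*A ε + mv^2 * (∑ ℓ, (A ℓ)^2) + K) := by
        rw [quad_integral, hsumb]
        ring

lemma step3 (g mv K Rk : ℝ) (c : Fin L → ℝ) (ε : Fin L) :
    ∫ ξ, g * (1 - 2*mv*(c ε + Rk * ξ ε) + K * ∑ ℓ, (c ℓ + Rk * ξ ℓ)^2) ∂stdGaussian L
      = g * (1 - 2*mv*c ε + K * ((∑ ℓ, (c ℓ)^2) + L * Rk^2)) := by
  have hpt : ∀ ξ : Fin L → ℝ,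
      1 - 2*mv*(c ε + Rk * ξ ε) + K * ∑ ℓ, (c ℓ + Rk * ξ ℓ)^2
        = ((1 - 2*mv*c ε) + (-(2*mv*Rk)) * ξ ε) + K * ∑ ℓ, (c ℓ + Rk * ξ ℓ)^2 := by
    intro ξ; ring
  have hI1 : Integrable (fun ξ : Fin L → ℝ => (1 - 2*mv*c ε) + (-(2*mv*Rk)) * ξ ε)
      (stdGaussian L) := (integrable_const _).add ((pi_int_eval ε).const_mul _)
  have hI2 : Integrable (fun ξ : Fin L → ℝ => K * ∑ ℓ, (c ℓ + Rk * ξ ℓ)^2) (stdGaussian L) :=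
    (integrable_finset_sum _ fun ℓ _ => quad_single_int (c ℓ) Rk ℓ).const_mul K
  calc ∫ ξ, g * (1 - 2*mv*(c ε + Rk * ξ ε) + K * ∑ ℓ, (c ℓ + Rk * ξ ℓ)^2) ∂stdGaussian L
      = ∫ ξ, g * (((1 - 2*mv*c ε) + (-(2*mv*Rk)) * ξ ε) + K * ∑ ℓ, (c ℓ + Rk * ξ ℓ)^2)
          ∂stdGaussian L := by
        congr 1; funext ξ; rw [hpt ξ]
    _ = g * ((∫ ξ, ((1 - 2*mv*c ε) + (-(2*mv*Rk)) * ξ ε) ∂stdGaussian L)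
          + ∫ ξ, K * ∑ ℓ, (c ℓ + Rk * ξ ℓ)^2 ∂stdGaussian L) := by
        rw [integral_const_mul, integral_add hI1 hI2]
    _ = g * (1 - 2*mv*c ε + K * ((∑ ℓ, (c ℓ)^2) + L * Rk^2)) := by
        congr 1
        have e1 : ∫ ξ, ((1 - 2*mv*c ε) + (-(2*mv*Rk)) * ξ ε) ∂stdGaussian L = 1 - 2*mv*c ε := by
          rw [integral_add (integrable_const _) ((pi_int_eval ε).const_mul _), integral_const,
            integral_const_mul, pi_integral_eval]
          simp
        have e2 : ∫ ξ, K * ∑ ℓ, (c ℓ + Rk * ξ ℓ)^2 ∂stdGaussian L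
            = K * ((∑ ℓ, (c ℓ)^2) + L * Rk^2) := by
          rw [integral_const_mul,
            integral_finset_sum _ fun ℓ _ => quad_single_int (c ℓ) Rk ℓ]
          rw [Finset.sum_congr rfl fun ℓ _ => quad_single_integral (c ℓ) Rk ℓ,
            Finset.sum_add_distrib]
          simp [Finset.card_univ]
        rw [e1, e2]

lemma inner3 (mk mv Rk Rv : ℝ) (ε : Fin L) (χ : Fin L → ℝ) :
    (∫ ξ, ∫ z, ∫ ζ, gMax L ε χ *
        (z ε - ∑ ℓ, (mv * z ℓ + Rv * ζ ℓ) * (1 + mk * χ ℓ + Rk * ξ ℓ)) ^ 2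
      ∂stdGaussian L ∂stdGaussian L ∂stdGaussian L)
      = gMax L ε χ * (1 - 2*mv*(1 + mk * χ ε)
          + (mv^2 + Rv^2) * ((∑ ℓ, (1 + mk * χ ℓ)^2) + L * Rk^2)) := by
  have s1 : ∀ ξ z : Fin L → ℝ,
      (∫ ζ, gMax L ε χ *
        (z ε - ∑ ℓ, (mv * z ℓ + Rv * ζ ℓ) * (1 + mk * χ ℓ + Rk * ξ ℓ)) ^ 2 ∂stdGaussian L)
      = gMax L ε χ * ((z ε - ∑ ℓ, mv * z ℓ * (1 + mk * χ ℓ + Rk * ξ ℓ))^2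
          + Rv^2 * ∑ ℓ, (1 + mk * χ ℓ + Rk * ξ ℓ)^2) :=
    fun ξ z => step1 (gMax L ε χ) mv Rv (fun ℓ => 1 + mk * χ ℓ + Rk * ξ ℓ) z ε
  have s2 : ∀ ξ : Fin L → ℝ,
      (∫ z, gMax L ε χ * ((z ε - ∑ ℓ, mv * z ℓ * (1 + mk * χ ℓ + Rk * ξ ℓ))^2
          + Rv^2 * ∑ ℓ, (1 + mk * χ ℓ + Rk * ξ ℓ)^2) ∂stdGaussian L)
      = gMax L ε χ * (1 - 2*mv*(1 + mk * χ ε + Rk * ξ ε)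
          + mv^2 * (∑ ℓ, (1 + mk * χ ℓ + Rk * ξ ℓ)^2)
          + Rv^2 * ∑ ℓ, (1 + mk * χ ℓ + Rk * ξ ℓ)^2) :=
    fun ξ => step2 (gMax L ε χ) mv (Rv^2 * ∑ ℓ, (1 + mk * χ ℓ + Rk * ξ ℓ)^2)
      (fun ℓ => 1 + mk * χ ℓ + Rk * ξ ℓ) ε
  calc (∫ ξ, ∫ z, ∫ ζ, gMax L ε χ *
        (z ε - ∑ ℓ, (mv * z ℓ + Rv * ζ ℓ) * (1 + mk * χ ℓ + Rk * ξ ℓ)) ^ 2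
      ∂stdGaussian L ∂stdGaussian L ∂stdGaussian L)
      = ∫ ξ, ∫ z, gMax L ε χ * ((z ε - ∑ ℓ, mv * z ℓ * (1 + mk * χ ℓ + Rk * ξ ℓ))^2
          + Rv^2 * ∑ ℓ, (1 + mk * χ ℓ + Rk * ξ ℓ)^2) ∂stdGaussian L ∂stdGaussian L := by
        congr 1; funext ξ; congr 1; funext z; exact s1 ξ z
    _ = ∫ ξ, gMax L ε χ * (1 - 2*mv*(1 + mk * χ ε + Rk * ξ ε)
          + mv^2 * (∑ ℓ, (1 + mk * χ ℓ + Rk * ξ ℓ)^2)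
          + Rv^2 * ∑ ℓ, (1 + mk * χ ℓ + Rk * ξ ℓ)^2) ∂stdGaussian L := by
        congr 1; funext ξ; exact s2 ξ
    _ = ∫ ξ, gMax L ε χ * (1 - 2*mv*((1 + mk * χ ε) + Rk * ξ ε)
          + (mv^2 + Rv^2) * ∑ ℓ, ((1 + mk * χ ℓ) + Rk * ξ ℓ)^2) ∂stdGaussian L := by
        congr 1; funext ξ
        ring
    _ = gMax L ε χ * (1 - 2*mv*(1 + mk * χ ε)
          + (mv^2 + Rv^2) * ((∑ ℓ, (1 + mk * χ ℓ)^2) + L * Rk^2)) := by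
        exact step3 (gMax L ε χ) mv (mv^2+Rv^2) Rk (fun ℓ => 1 + mk * χ ℓ) ε

end Steps

section Chi
variable {L : ℕ}

lemma tie_null (ℓ m : Fin L) (h : ℓ ≠ m) : stdGaussian L {χ | χ ℓ = χ m} = 0 := by
  cases L with
  | zero => exact ℓ.elim0
  | succ n =>
    have hmp := measurePreserving_piFinSuccAbove (fun _ : Fin (n+1) => gR) ℓ
    obtain ⟨j, hj⟩ := Fin.exists_succAbove_eq h.symm
    set e := MeasurableEquiv.piFinSuccAbove (fun _ : Fin (n+1) => ℝ) ℓ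
    have hT : MeasurableSet {p : ℝ × (Fin n → ℝ) | p.1 = p.2 j} :=
      measurableSet_eq_fun measurable_fst ((measurable_pi_apply j).comp measurable_snd)
    have hpre : {χ : Fin (n+1) → ℝ | χ ℓ = χ m} = e ⁻¹' {p | p.1 = p.2 j} := by
      ext χ
      simp only [Set.mem_setOf_eq, Set.mem_preimage]
      have h1 : (e χ).1 = χ ℓ := by rfl
      have h2 : (e χ).2 j = χ (ℓ.succAbove j) := by
        rfl
      rw [h1, h2, hj]
    rw [show stdGaussian (n+1) = Measure.pi (fun _ : Fin (n+1) => gR) from rfl, hpre,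
      hmp.measure_preimage hT.nullMeasurableSet]
    rw [Measure.prod_apply hT]
    have hz : ∀ t : ℝ, (Measure.pi fun _ : Fin n => gR)
        (Prod.mk t ⁻¹' {p : ℝ × (Fin n → ℝ) | p.1 = p.2 j}) = 0 := by
      intro t
      have : (Prod.mk t ⁻¹' {p : ℝ × (Fin n → ℝ) | p.1 = p.2 j})
          = Function.eval j ⁻¹' ({t} : Set ℝ) := by
        ext y
        simp [Function.eval, eq_comm]
      rw [this]
      refine Measure.pi_eval_preimage_null _ ?_
      rw [show gR = gaussianReal 0 1 from rfl, gaussianReal_eq,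
        withDensity_apply _ (measurableSet_singleton t)]
      exact setLIntegral_measure_zero _ _ (measure_singleton t)
    simp only [hz]
    simp

lemma ae_no_tie : ∀ᵐ χ ∂stdGaussian L, ∀ ℓ m : Fin L, ℓ ≠ m → χ ℓ ≠ χ m := by
  rw [MeasureTheory.ae_all_iff]
  intro ℓ
  rw [MeasureTheory.ae_all_iff]
  intro m
  by_cases h : ℓ = m
  · exact Filter.Eventually.of_forall fun χ hlm => absurd h hlm
  · have h0 := tie_null ℓ m h
    have hae : ∀ᵐ χ ∂stdGaussian L, ¬ (χ ℓ = χ m) := by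
      rw [MeasureTheory.ae_iff]
      simpa [not_not] using h0
    filter_upwards [hae] with χ hχ _
    exact hχ

def Smax (L : ℕ) (ε : Fin L) : Set (Fin L → ℝ) := {χ | ∀ ℓ, ℓ ≠ ε → χ ℓ < χ ε}

lemma measurable_Smax (ε : Fin L) : MeasurableSet (Smax L ε) := by
  have : Smax L ε = ⋂ ℓ, {χ : Fin L → ℝ | ℓ ≠ ε → χ ℓ < χ ε} := by
    ext χ; simp [Smax]
  rw [this]
  refine MeasurableSet.iInter fun ℓ => ?_
  by_cases h : ℓ = ε
  · simp [h]
  · have : {χ : Fin L → ℝ | ℓ ≠ ε → χ ℓ < χ ε} = {χ | χ ℓ < χ ε} := by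
      ext χ; simp [h]
    rw [this]
    exact measurableSet_lt (measurable_pi_apply ℓ) (measurable_pi_apply ε)

lemma gMax_mul (ε : Fin L) (ψ : (Fin L → ℝ) → ℝ) (χ : Fin L → ℝ) :
    gMax L ε χ * ψ χ = (Smax L ε).indicator (fun χ => (L : ℝ) * ψ χ) χ := by
  by_cases h : ∀ ℓ, ℓ ≠ ε → χ ℓ < χ ε
  · rw [gMax, if_pos h, Set.indicator_of_mem (show χ ∈ Smax L ε from h)]
  · rw [gMax, if_neg h, Set.indicator_of_notMem (show χ ∉ Smax L ε from h), zero_mul]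

lemma isup_measurable : Measurable (fun χ : Fin L → ℝ => ⨆ ℓ, χ ℓ) :=
  Measurable.iSup fun ℓ => measurable_pi_apply ℓ

lemma isup_abs_le (hL : 1 ≤ L) (χ : Fin L → ℝ) : |⨆ ℓ, χ ℓ| ≤ ∑ ℓ, |χ ℓ| := by
  have hne : Nonempty (Fin L) := ⟨⟨0, hL⟩⟩
  have hb : BddAbove (Set.range χ) := (Set.finite_range χ).bddAbove
  have habs : ∀ ℓ, χ ℓ ≤ ∑ m, |χ m| := fun ℓ =>
    (le_abs_self _).trans (Finset.single_le_sum (f := fun m => |χ m|)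
      (fun i _ => abs_nonneg _) (Finset.mem_univ ℓ))
  rw [abs_le]
  constructor
  · refine le_trans ?_ (le_ciSup hb (Classical.arbitrary (Fin L)))
    set i0 := Classical.arbitrary (Fin L)
    have h1 : |χ i0| ≤ ∑ m, |χ m| :=
      Finset.single_le_sum (f := fun m => |χ m|) (fun i _ => abs_nonneg _) (Finset.mem_univ i0)
    have h2 : -|χ i0| ≤ χ i0 := neg_abs_le _
    linarith
  · exact ciSup_le habs

lemma isup_int (hL : 1 ≤ L) :
    Integrable (fun χ : Fin L → ℝ => ⨆ ℓ, χ ℓ) (stdGaussian L) := by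
  refine Integrable.mono' (g := fun χ : Fin L → ℝ => ∑ ℓ, |χ ℓ|)
    (integrable_finset_sum _ fun ℓ _ => (pi_int_eval ℓ).abs)
    isup_measurable.aestronglyMeasurable (Filter.Eventually.of_forall fun χ => ?_)
  simpa using isup_abs_le hL χ

end Chi

section Risk
variable {L : ℕ}

/-- The integrand in `χ` after integrating out `ξ, z, ζ`. -/
noncomputable def hFun (L : ℕ) (mk mv Rk Rv : ℝ) (ε : Fin L) (χ : Fin L → ℝ) : ℝ :=
  1 - 2*mv*(1 + mk * χ ε) + (mv^2 + Rv^2) * ((∑ ℓ, (1 + mk * χ ℓ)^2) + L * Rk^2)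

lemma sumquad_int (mk : ℝ) :
    Integrable (fun χ : Fin L → ℝ => ∑ ℓ, (1 + mk * χ ℓ)^2) (stdGaussian L) :=
  integrable_finset_sum _ fun ℓ _ => quad_single_int 1 mk ℓ

lemma sumquad_integral (mk : ℝ) :
    ∫ χ : Fin L → ℝ, (∑ ℓ, (1 + mk * χ ℓ)^2) ∂stdGaussian L = L * (1 + mk^2) := by
  rw [integral_finset_sum _ fun ℓ _ => quad_single_int 1 mk ℓ,
    Finset.sum_congr rfl fun ℓ _ => quad_single_integral 1 mk ℓ]
  simp [Finset.card_univ]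
  ring

lemma hFun_eq (mk mv Rk Rv : ℝ) (ε : Fin L) :
    hFun L mk mv Rk Rv ε = fun χ =>
      ((1 - 2*mv + (mv^2+Rv^2) * (L * Rk^2)) + (-(2*mv*mk)) * χ ε)
        + (mv^2+Rv^2) * ∑ ℓ, (1 + mk * χ ℓ)^2 := by
  funext χ; rw [hFun]; ring

lemma hFun_int (mk mv Rk Rv : ℝ) (ε : Fin L) :
    Integrable (hFun L mk mv Rk Rv ε) (stdGaussian L) := by
  rw [hFun_eq]
  exact ((integrable_const _).add ((pi_int_eval ε).const_mul _)).add
    ((sumquad_int mk).const_mul _)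

lemma argmax_props (hL : 1 ≤ L) (χ : Fin L → ℝ)
    (hnt : ∀ ℓ m : Fin L, ℓ ≠ m → χ ℓ ≠ χ m) :
    ∃ ε₀ : Fin L, χ ∈ Smax L ε₀ ∧ (∀ ε, ε ≠ ε₀ → χ ∉ Smax L ε) ∧ χ ε₀ = ⨆ ℓ, χ ℓ := by
  have hne : Nonempty (Fin L) := ⟨⟨0, hL⟩⟩
  obtain ⟨ε₀, hmax⟩ := Finite.exists_max χ
  refine ⟨ε₀, ?_, ?_, ?_⟩
  · intro ℓ hℓ
    exact lt_of_le_of_ne (hmax ℓ) (hnt ℓ ε₀ hℓ)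
  · intro ε hε hmem
    exact absurd (hmem ε₀ (fun hc => hε hc.symm)) (not_lt.2 (hmax ε))
  · exact le_antisymm (le_ciSup (Set.finite_range χ).bddAbove ε₀) (ciSup_le hmax)

/-- Value of the `χ`-integral of the summed indicator integrands. -/
lemma chi_sum (hL : 1 ≤ L) (mk mv Rk Rv : ℝ) :
    ∑ ε : Fin L, ∫ χ, gMax L ε χ * hFun L mk mv Rk Rv ε χ ∂stdGaussian L
      = L * (1 - 2*mv*(1 + mk * fmax L)
          + (mv^2+Rv^2) * (L * (1 + mk^2) + L * Rk^2)) := by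
  have hint : ∀ ε : Fin L, Integrable
      (fun χ => (Smax L ε).indicator (fun χ => (L:ℝ) * hFun L mk mv Rk Rv ε χ) χ)
      (stdGaussian L) := fun ε =>
    (((hFun_int mk mv Rk Rv ε).const_mul (L:ℝ)).indicator (measurable_Smax ε))
  have hrw : ∀ ε : Fin L,
      (∫ χ, gMax L ε χ * hFun L mk mv Rk Rv ε χ ∂stdGaussian L)
      = ∫ χ, (Smax L ε).indicator (fun χ => (L:ℝ) * hFun L mk mv Rk Rv ε χ) χ
          ∂stdGaussian L := by
    intro ε
    congr 1; funext χ; exact gMax_mul ε _ χ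
  rw [Finset.sum_congr rfl fun ε _ => hrw ε,
    ← integral_finset_sum _ fun ε _ => hint ε]
  have hae : ∀ᵐ χ ∂stdGaussian L,
      (∑ ε, (Smax L ε).indicator (fun χ => (L:ℝ) * hFun L mk mv Rk Rv ε χ) χ)
        = (L:ℝ) * (1 - 2*mv*(1 + mk * (⨆ ℓ, χ ℓ))
            + (mv^2+Rv^2) * ((∑ ℓ, (1 + mk * χ ℓ)^2) + L * Rk^2)) := by
    filter_upwards [ae_no_tie] with χ hnt
    obtain ⟨ε₀, hmem, hnot, hval⟩ := argmax_props hL χ hnt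
    rw [Finset.sum_eq_single ε₀
      (fun ε _ hε => Set.indicator_of_notMem (hnot ε hε) _)
      (fun hmemu => absurd (Finset.mem_univ ε₀) hmemu),
      Set.indicator_of_mem hmem, hFun, hval]
  rw [integral_congr_ae hae, integral_const_mul]
  congr 1
  have hI1 : Integrable (fun χ : Fin L → ℝ =>
      ((1 - 2*mv + (mv^2+Rv^2) * (L * Rk^2)) + (-(2*mv*mk)) * (⨆ ℓ, χ ℓ)))
      (stdGaussian L) := (integrable_const _).add ((isup_int hL).const_mul _)
  have hI2 : Integrable (fun χ : Fin L → ℝ => (mv^2+Rv^2) * ∑ ℓ, (1 + mk * χ ℓ)^2)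
      (stdGaussian L) := (sumquad_int mk).const_mul _
  have hpt : (fun χ : Fin L → ℝ => 1 - 2*mv*(1 + mk * (⨆ ℓ, χ ℓ))
        + (mv^2+Rv^2) * ((∑ ℓ, (1 + mk * χ ℓ)^2) + L * Rk^2))
      = fun χ => ((1 - 2*mv + (mv^2+Rv^2) * (L * Rk^2)) + (-(2*mv*mk)) * (⨆ ℓ, χ ℓ))
        + (mv^2+Rv^2) * ∑ ℓ, (1 + mk * χ ℓ)^2 := by
    funext χ; ring
  rw [hpt, integral_add hI1 hI2,
    integral_add (integrable_const _) ((isup_int hL).const_mul _),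
    integral_const, integral_const_mul, integral_const_mul, sumquad_integral,
    show (∫ χ, (⨆ ℓ, χ ℓ) ∂stdGaussian L) = fmax L from rfl]
  simp
  ring

/-- Closed form for the population risk. -/
lemma risk_eq (hL : 1 ≤ L) (mk mv Rk Rv : ℝ) :
    linRiskMax L mk mv Rk Rv
      = 1 - 2*mv*(1 + mk * fmax L) + (mv^2+Rv^2) * (L * (1 + mk^2 + Rk^2)) := by
  have hLpos : (0:ℝ) < L := by exact_mod_cast hL
  rw [linRiskMax]
  have hrw : ∀ ε : Fin L,
      (∫ χ, ∫ ξ, ∫ z, ∫ ζ, gMax L ε χ *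
          (z ε - ∑ ℓ, (mv * z ℓ + Rv * ζ ℓ) * (1 + mk * χ ℓ + Rk * ξ ℓ)) ^ 2
        ∂stdGaussian L ∂stdGaussian L ∂stdGaussian L ∂stdGaussian L)
      = ∫ χ, gMax L ε χ * hFun L mk mv Rk Rv ε χ ∂stdGaussian L := by
    intro ε
    congr 1; funext χ
    rw [inner3 mk mv Rk Rv ε χ, hFun]
  rw [Finset.sum_congr rfl fun ε _ => hrw ε, chi_sum hL mk mv Rk Rv,
    ← mul_assoc, inv_mul_cancel₀ (ne_of_gt hLpos), one_mul]
  ring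

end Risk

section Opt
variable {L : ℕ}

lemma risk_lower (hL : 1 ≤ L) (mk mv Rk Rv : ℝ) :
    1 - (1 + fmax L ^ 2) / (L:ℝ) ≤ linRiskMax L mk mv Rk Rv := by
  rw [risk_eq hL]
  set f := fmax L
  have hℓ : (1:ℝ) ≤ (L:ℝ) := by exact_mod_cast hL
  have hℓpos : (0:ℝ) < (L:ℝ) := by linarith
  set u := 1 + mk * f with hu
  set S := (L:ℝ) * (1 + mk^2 + Rk^2) with hS
  have hSpos : 0 < S := by
    have : (0:ℝ) < 1 + mk^2 + Rk^2 := by positivity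
    exact mul_pos hℓpos this
  have key1 : 2*mv*u - (mv^2+Rv^2)*S ≤ u^2/S := by
    rw [le_div_iff₀ hSpos]
    nlinarith [sq_nonneg (mv*S - u), sq_nonneg (Rv*S)]
  have key2 : u^2/S ≤ (1 + f^2)/(L:ℝ) := by
    rw [div_le_div_iff₀ hSpos hℓpos]
    have h3 : u^2 ≤ (1+f^2)*(1+mk^2+Rk^2) := by
      nlinarith [sq_nonneg (f - mk), mul_nonneg (sq_nonneg Rk) (sq_nonneg f), sq_nonneg Rk]
    calc u^2 * (L:ℝ) ≤ ((1+f^2)*(1+mk^2+Rk^2)) * (L:ℝ) := by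
          exact mul_le_mul_of_nonneg_right h3 hℓpos.le
      _ = (1+f^2) * S := by rw [hS]; ring
  have := le_trans key1 key2
  linarith

lemma risk_attained (hL : 1 ≤ L) :
    linRiskMax L (fmax L) ((L:ℝ)⁻¹) 0 0 = 1 - (1 + fmax L ^ 2) / (L:ℝ) := by
  rw [risk_eq hL]
  have hℓpos : (0:ℝ) < (L:ℝ) := by exact_mod_cast hL
  field_simp
  ring

lemma sInf_risk (hL : 1 ≤ L) :
    sInf {r : ℝ | ∃ mk mv Rk Rv : ℝ, r = linRiskMax L mk mv Rk Rv}
      = 1 - (1 + fmax L ^ 2) / (L : ℝ) := by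
  refine le_antisymm ?_ ?_
  · refine csInf_le ⟨1 - (1 + fmax L ^ 2) / (L:ℝ), ?_⟩ ?_
    · rintro r ⟨mk, mv, Rk, Rv, rfl⟩
      exact risk_lower hL mk mv Rk Rv
    · exact ⟨fmax L, (L:ℝ)⁻¹, 0, 0, (risk_attained hL).symm⟩
  · refine le_csInf ⟨linRiskMax L 0 0 0 0, 0, 0, 0, 0, rfl⟩ ?_
    rintro r ⟨mk, mv, Rk, Rv, rfl⟩
    exact risk_lower hL mk mv Rk Rv

end Opt

section Asymp
variable {L : ℕ}

lemma fmax_nonneg (hL : 1 ≤ L) : 0 ≤ fmax L := by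
  have h0 : ∫ χ : Fin L → ℝ, χ ⟨0, hL⟩ ∂stdGaussian L = 0 := pi_integral_eval _
  have hmono : ∫ χ : Fin L → ℝ, χ ⟨0, hL⟩ ∂stdGaussian L
      ≤ ∫ χ, (⨆ ℓ, χ ℓ) ∂stdGaussian L := by
    refine integral_mono (pi_int_eval _) (isup_int hL) fun χ => ?_
    exact le_ciSup (Set.finite_range χ).bddAbove _
  rw [h0] at hmono
  exact hmono

lemma exp_sup_le (hL : 1 ≤ L) (t : ℝ) (χ : Fin L → ℝ) :
    Real.exp (t * ⨆ ℓ, χ ℓ) ≤ ∑ ℓ, Real.exp (t * χ ℓ) := by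
  have hne : Nonempty (Fin L) := ⟨⟨0, hL⟩⟩
  obtain ⟨ε₀, hmax⟩ := Finite.exists_max χ
  have hsup : (⨆ ℓ, χ ℓ) = χ ε₀ :=
    le_antisymm (ciSup_le hmax) (le_ciSup (Set.finite_range χ).bddAbove ε₀)
  rw [hsup]
  exact Finset.single_le_sum (f := fun ℓ => Real.exp (t * χ ℓ))
    (fun ℓ _ => (Real.exp_pos _).le) (Finset.mem_univ ε₀)

lemma int_exp_sup (hL : 1 ≤ L) (t : ℝ) :
    Integrable (fun χ : Fin L → ℝ => Real.exp (t * ⨆ ℓ, χ ℓ)) (stdGaussian L) := by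
  refine Integrable.mono' (g := fun χ : Fin L → ℝ => ∑ ℓ, Real.exp (t * χ ℓ))
    (integrable_finset_sum _ fun ℓ _ => pi_int_exp ℓ t)
    ((isup_measurable.const_mul t).exp.aestronglyMeasurable)
    (Filter.Eventually.of_forall fun χ => ?_)
  rw [Real.norm_eq_abs, abs_of_pos (Real.exp_pos _)]
  exact exp_sup_le hL t χ

lemma mgf_bound (hL : 1 ≤ L) (t : ℝ) :
    Real.exp (t * fmax L) ≤ (L:ℝ) * Real.exp (t^2/2) := by
  have hf : Integrable (fun χ : Fin L → ℝ => t * ⨆ ℓ, χ ℓ) (stdGaussian L) :=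
    (isup_int hL).const_mul t
  have hgf : Integrable (fun χ : Fin L → ℝ => Real.exp (t * ⨆ ℓ, χ ℓ)) (stdGaussian L) :=
    int_exp_sup hL t
  have hJ := (convexOn_exp).map_average_le continuous_exp.continuousOn isClosed_univ
    (Filter.Eventually.of_forall fun χ : Fin L → ℝ => Set.mem_univ _) hf
    (by exact hgf : Integrable (Real.exp ∘ fun χ : Fin L → ℝ => t * ⨆ ℓ, χ ℓ) (stdGaussian L))
  rw [average_eq_integral, average_eq_integral] at hJ
  have h1 : ∫ χ : Fin L → ℝ, (t * ⨆ ℓ, χ ℓ) ∂stdGaussian L = t * fmax L := by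
    rw [integral_const_mul]; rfl
  have h2 : (∫ χ : Fin L → ℝ, Real.exp (t * ⨆ ℓ, χ ℓ) ∂stdGaussian L)
      ≤ (L:ℝ) * Real.exp (t^2/2) := by
    have hmono := integral_mono hgf (integrable_finset_sum _ fun ℓ _ => pi_int_exp ℓ t)
      (exp_sup_le hL t)
    rw [integral_finset_sum _ fun ℓ _ => pi_int_exp ℓ t,
      Finset.sum_congr rfl (fun ℓ _ => pi_integral_exp ℓ t)] at hmono
    simpa [Finset.card_univ] using hmono
  calc Real.exp (t * fmax L) = Real.exp (∫ χ : Fin L → ℝ, (t * ⨆ ℓ, χ ℓ) ∂stdGaussian L) := by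
        rw [h1]
    _ ≤ ∫ χ : Fin L → ℝ, Real.exp (t * ⨆ ℓ, χ ℓ) ∂stdGaussian L := hJ
    _ ≤ (L:ℝ) * Real.exp (t^2/2) := h2

lemma fmax_le_sqrt (hL2 : 2 ≤ L) : fmax L ≤ Real.sqrt (2 * Real.log L) := by
  have hL : 1 ≤ L := le_trans one_le_two hL2
  have hL2' : (2:ℝ) ≤ (L:ℝ) := by exact_mod_cast hL2
  have hlogpos : 0 < Real.log L := Real.log_pos (by linarith)
  set t := Real.sqrt (2 * Real.log L) with htdef
  have ht2 : t^2 = 2 * Real.log L := Real.sq_sqrt (by positivity)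
  have htpos : 0 < t := Real.sqrt_pos.2 (by positivity)
  have hb := mgf_bound hL t
  have hlog : t * fmax L ≤ Real.log ((L:ℝ) * Real.exp (t^2/2)) := by
    have := Real.log_le_log (Real.exp_pos (t * fmax L)) hb
    rwa [Real.log_exp] at this
  rw [Real.log_mul (by positivity) (Real.exp_ne_zero _), Real.log_exp] at hlog
  have h3 : t * fmax L ≤ t * t := by
    have : Real.log L + t^2/2 = t * t := by rw [ht2]; ring_nf; linarith [ht2]
    linarith
  exact le_of_mul_le_mul_left h3 htpos

end Asymp

/-- on max-SLR at `ν = ∞` with deterministic length `L`, the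
minimal population risk of linear attention equals `1 − (1 + f(L)²)/L`, and
since `f(L) = O(√(log L))` this risk is `1 − O((log L)/L)` as `L → ∞`. -/
theorem stmt6 :
    (∀ L : ℕ, 1 ≤ L →
      sInf {r : ℝ | ∃ mk mv Rk Rv : ℝ, r = linRiskMax L mk mv Rk Rv}
        = 1 - (1 + fmax L ^ 2) / (L : ℝ)) ∧
    (fun L : ℕ => (1 + fmax L ^ 2) / (L : ℝ))
      =O[atTop] fun L : ℕ => Real.log L / (L : ℝ) := by
  constructor
  · intro L hL
    exact sInf_risk hL
  · rw [isBigO_iff]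
    refine ⟨3, ?_⟩
    rw [eventually_atTop]
    refine ⟨3, fun L hL3 => ?_⟩
    have hL2 : 2 ≤ L := le_trans (by norm_num) hL3
    have hL1 : 1 ≤ L := le_trans (by norm_num) hL3
    have hL3' : (3:ℝ) ≤ (L:ℝ) := by exact_mod_cast hL3
    have hLpos : (0:ℝ) < (L:ℝ) := by linarith
    have hlog1 : 1 ≤ Real.log L := by
      have he3 : Real.exp 1 ≤ 3 := le_trans Real.exp_one_lt_d9.le (by norm_num)
      have h1 : (1:ℝ) ≤ Real.log 3 := by
        rw [Real.le_log_iff_exp_le (by norm_num)]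
        exact he3
      exact le_trans h1 (Real.log_le_log (by norm_num) hL3')
    have hfsq : fmax L ^ 2 ≤ 2 * Real.log L := by
      have h1 := fmax_le_sqrt hL2
      have h2 := fmax_nonneg hL1
      have h3 : fmax L ^ 2 ≤ Real.sqrt (2 * Real.log L) ^ 2 :=
        pow_le_pow_left₀ h2 h1 2
      rwa [Real.sq_sqrt (by linarith : (0:ℝ) ≤ 2 * Real.log L)] at h3
    have hnum : 1 + fmax L ^ 2 ≤ 3 * Real.log L := by linarith
    have hfnn : (0:ℝ) ≤ 1 + fmax L ^ 2 := by positivity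
    rw [Real.norm_eq_abs, Real.norm_eq_abs, abs_of_nonneg (by positivity),
      abs_of_nonneg (by positivity : (0:ℝ) ≤ Real.log L / (L:ℝ))]
    rw [show (3:ℝ) * (Real.log L / (L:ℝ)) = (3 * Real.log L) / (L:ℝ) by ring]
    gcongr
end

section
/- The population risk of the attention estimator f_{σ,k,v}(X) = σ(Xk/√D)ᵀ(Xv/√D), under the SLR data model with hidden directions k*, v*, depends on (k, v) only through the seven scalars m_{kk*} = kᵀk*/D, m_{vv*} = vᵀv*/D, m_{kv*} = kᵀv*/D, m_{vk*} = vᵀk*/D, q_{kk} = ‖k‖²/D, q_{vv} = ‖v‖²/D, q_{vk} = kᵀv/D, in the limit D → ∞. Concretely, conditionally on L, the joint law of (Xk/√D, Xv/√D, Xk*/√D, Xv*/√D) is Gaussian with covariance determined by these seven parameters (and the unit normalizations of k*, v*), hence the risk is a function of them. -/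
open MeasureTheory ProbabilityTheory Real

lemma lint_fin_prod {n : ℕ} (f : Fin n → ℝ → ENNReal) (hf : ∀ i, Measurable (f i)) :
    ∫⁻ x : Fin n → ℝ, ∏ i, f i (x i) ∂(Measure.pi fun _ => (volume : Measure ℝ))
      = ∏ i, ∫⁻ t, f i t := by
  induction n with
  | zero => simp
  | succ n ih =>
    rw [← ((measurePreserving_piFinSuccAbove (fun _ : Fin (n+1) => (volume : Measure ℝ))
        0).symm).lintegral_comp_emb (MeasurableEquiv.measurableEmbedding _)]
    have : ∀ (p : ℝ × (Fin n → ℝ)),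
        (∏ i, f i (((MeasurableEquiv.piFinSuccAbove (fun _ => ℝ) 0).symm p) i))
        = f 0 p.1 * ∏ i : Fin n, f i.succ (p.2 i) := by
      intro p
      rw [Fin.prod_univ_succ]
      rfl
    simp_rw [this]
    rw [lintegral_prod_mul (f := f 0) (g := fun y : Fin n → ℝ => ∏ i : Fin n, f i.succ (y i))
      (hf 0).aemeasurable]
    · rw [ih (fun i => f i.succ) (fun i => hf _), Fin.prod_univ_succ]
    · exact (Finset.measurable_prod Finset.univ fun i _ =>
        (hf i.succ).comp (measurable_pi_apply i)).aemeasurable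
local notation "⟪" x ", " y "⟫" => @inner ℝ _ _ x y

lemma gaussPi (D : ℕ) :
    (Measure.pi fun _ : Fin D => gaussianReal 0 1)
      = (Measure.pi fun _ : Fin D => (volume : Measure ℝ)).withDensity
          (fun x => ∏ i, gaussianPDF 0 1 (x i)) := by
  refine Measure.pi_eq fun s hs => ?_
  rw [withDensity_apply _ (MeasurableSet.univ_pi hs),
    ← lintegral_indicator (MeasurableSet.univ_pi hs)]
  have hind : ∀ x : Fin D → ℝ,
      (Set.univ.pi s).indicator (fun x => ∏ i, gaussianPDF 0 1 (x i)) x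
        = ∏ i, (s i).indicator (gaussianPDF 0 1) (x i) := by
    intro x
    by_cases hx : x ∈ Set.univ.pi s
    · rw [Set.indicator_of_mem hx]
      exact Finset.prod_congr rfl fun i _ =>
        (Set.indicator_of_mem (hx i (Set.mem_univ i)) _).symm
    · rw [Set.indicator_of_notMem hx]
      simp only [Set.mem_univ_pi, not_forall] at hx
      obtain ⟨i, hi⟩ := hx
      exact (Finset.prod_eq_zero (Finset.mem_univ i)
        (by rw [Set.indicator_of_notMem hi])).symm
  simp_rw [hind]
  rw [lint_fin_prod _ (fun i => ((measurable_gaussianPDF 0 1).indicator (hs i)))]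
  refine Finset.prod_congr rfl fun i _ => ?_
  rw [gaussianReal_apply 0 one_ne_zero (s i), ← lintegral_indicator (hs i)]

lemma gauss_mp {D : ℕ} (t : (Fin D → ℝ) ≃ᵐ (Fin D → ℝ))
    (ht : MeasurePreserving t (Measure.pi fun _ => volume) (Measure.pi fun _ => volume))
    (hnorm : ∀ x, ∑ i, t x i ^ 2 = ∑ i, x i ^ 2) :
    MeasurePreserving t (Measure.pi fun _ : Fin D => gaussianReal 0 1)
      (Measure.pi fun _ : Fin D => gaussianReal 0 1) := by
  have hF : ∀ y : Fin D → ℝ, ∏ i, gaussianPDF 0 1 (y i)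
      = ENNReal.ofReal ((Real.sqrt (2 * π * 1))⁻¹ ^ D * Real.exp (-(∑ i, y i ^ 2) / 2)) := by
    intro y
    have h1 : ∏ i, gaussianPDFReal 0 1 (y i)
        = (Real.sqrt (2 * π * 1))⁻¹ ^ D * Real.exp (-(∑ i, y i ^ 2) / 2) := by
      simp only [gaussianPDFReal, sub_zero, NNReal.coe_one, mul_one]
      rw [Finset.prod_mul_distrib, Finset.prod_const, Finset.card_univ, Fintype.card_fin,
        ← Real.exp_sum]
      congr 2
      rw [← Finset.sum_div, ← Finset.sum_neg_distrib]
    rw [← h1, ENNReal.ofReal_prod_of_nonneg fun i _ => gaussianPDFReal_nonneg 0 1 (y i)]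
    rfl
  refine ⟨t.measurable, ?_⟩
  refine Measure.ext fun s hs => ?_
  rw [Measure.map_apply t.measurable hs, gaussPi D, withDensity_apply _ (t.measurable hs),
    withDensity_apply _ hs]
  simp_rw [hF]
  rw [← ht.setLIntegral_comp_preimage_emb t.measurableEmbedding
    (fun y => ENNReal.ofReal ((Real.sqrt (2 * π * 1))⁻¹ ^ D * Real.exp (-(∑ i, y i ^ 2) / 2))) s]
  simp_rw [hnorm]

lemma exists_isoequiv {n : ℕ} {ι : Type*} [Fintype ι]
    (w w' : ι → EuclideanSpace ℝ (Fin n))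
    (h : ∀ i j, ⟪w i, w j⟫ = ⟪w' i, w' j⟫) :
    ∃ T : EuclideanSpace ℝ (Fin n) ≃ₗᵢ[ℝ] EuclideanSpace ℝ (Fin n), ∀ i, T (w i) = w' i := by
  classical
  let mk : (ι → EuclideanSpace ℝ (Fin n)) → ((ι → ℝ) →ₗ[ℝ] EuclideanSpace ℝ (Fin n)) := fun u =>
    { toFun := fun c => ∑ i, c i • u i
      map_add' := by intro a b; simp [add_smul, Finset.sum_add_distrib]
      map_smul' := by intro r a; simp [mul_smul, Finset.smul_sum] }
  let A := mk w
  let B := mk w'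
  have hAB : ∀ c, ⟪A c, A c⟫ = ⟪B c, B c⟫ := by
    intro c
    have expand : ∀ u : ι → EuclideanSpace ℝ (Fin n),
        ⟪mk u c, mk u c⟫ = ∑ i, ∑ j, c i * c j * ⟪u i, u j⟫ := by
      intro u
      simp only [mk, LinearMap.coe_mk, AddHom.coe_mk, sum_inner, inner_sum,
        real_inner_smul_left, real_inner_smul_right]
      refine Finset.sum_congr rfl fun i _ => Finset.sum_congr rfl fun j _ => by
        rw [real_inner_comm]; ring
    rw [expand, expand]
    exact Finset.sum_congr rfl fun i _ => Finset.sum_congr rfl fun j _ => by rw [h]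
  have hnorm : ∀ c, ‖A c‖ = ‖B c‖ := by
    intro c
    rw [norm_eq_sqrt_real_inner, norm_eq_sqrt_real_inner, hAB]
  have hker : LinearMap.ker A = LinearMap.ker B := by
    ext c
    simp only [LinearMap.mem_ker]
    rw [← norm_eq_zero, hnorm c, norm_eq_zero]
  let eA := A.quotKerEquivRange
  let eB := B.quotKerEquivRange
  let q := Submodule.quotEquivOfEq _ _ hker
  let f0 : LinearMap.range A ≃ₗ[ℝ] LinearMap.range B := eA.symm.trans (q.trans eB)
  have hf0 : ∀ c : ι → ℝ, f0 ⟨A c, LinearMap.mem_range_self A c⟩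
      = ⟨B c, LinearMap.mem_range_self B c⟩ := by
    intro c
    have h1 : eA.symm ⟨A c, LinearMap.mem_range_self A c⟩ = Submodule.Quotient.mk c := by
      rw [LinearEquiv.symm_apply_eq]
      exact (Subtype.ext (A.quotKerEquivRange_apply_mk c)).symm
    show eB (q (eA.symm _)) = _
    rw [h1]
    show eB (Submodule.Quotient.mk c) = _
    exact Subtype.ext (B.quotKerEquivRange_apply_mk c)
  let f : LinearMap.range A →ₗᵢ[ℝ] EuclideanSpace ℝ (Fin n) :=
    { toLinearMap := (LinearMap.range B).subtype.comp f0.toLinearMap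
      norm_map' := by
        rintro ⟨x, hx⟩
        obtain ⟨c, rfl⟩ := hx
        simp only [LinearMap.coe_comp, Function.comp_apply, LinearEquiv.coe_coe,
          Submodule.coe_subtype]
        rw [hf0 c]
        exact (hnorm c).symm }
  let T0 := f.extend
  let T := T0.toLinearIsometryEquiv rfl
  refine ⟨T, fun i => ?_⟩
  have hwi : A (Pi.single i 1) = w i := by
    show (∑ j, Pi.single i 1 j • w j) = w i
    rw [Finset.sum_eq_single i]
    · simp
    · intro b _ hb; simp [Pi.single_apply, hb]
    · intro hi; exact absurd (Finset.mem_univ i) hi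
  have hwi' : B (Pi.single i 1) = w' i := by
    show (∑ j, Pi.single i 1 j • w' j) = w' i
    rw [Finset.sum_eq_single i]
    · simp
    · intro b _ hb; simp [Pi.single_apply, hb]
    · intro hi; exact absurd (Finset.mem_univ i) hi
  have hmem : w i ∈ LinearMap.range A := hwi ▸ LinearMap.mem_range_self A _
  have hTw : T (w i) = T0 (w i) := rfl
  rw [hTw]
  have hext : T0 ((⟨A (Pi.single i 1), LinearMap.mem_range_self A _⟩ :
      LinearMap.range A) : EuclideanSpace ℝ (Fin n))
      = f ⟨A (Pi.single i 1), LinearMap.mem_range_self A _⟩ :=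
    f.extend_apply _
  rw [← hwi, hext]
  show ((LinearMap.range B).subtype (f0 _)) = _
  rw [hf0]
  exact hwi'

/-- Law of `L` i.i.d. standard Gaussian tokens in `ℝ^D`. -/
noncomputable def tokenGaussian (L D : ℕ) : Measure (Fin L → Fin D → ℝ) :=
  Measure.pi fun _ => Measure.pi fun _ => gaussianReal 0 1

/-- Population risk of the attention estimator
`f_{σ,k,v}(X) = σ(Xk/√D)ᵀ(Xv/√D)` under the SLR model with hidden directions
`k*, v*` and weight `g`, label `y = (Xv*/√D)_ε`. -/
noncomputable def attRisk (L D : ℕ) (g : Fin L → (Fin L → ℝ) → ℝ)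
    (σ : (Fin L → ℝ) → (Fin L → ℝ)) (kstar vstar k v : Fin D → ℝ) : ℝ :=
  (L : ℝ)⁻¹ * ∑ ε : Fin L, ∫ X,
    g ε (fun ℓ => (∑ i, X ℓ i * kstar i) / Real.sqrt D) *
      ((∑ i, X ε i * vstar i) / Real.sqrt D
        - ∑ ℓ, σ (fun ℓ' => (∑ i, X ℓ' i * k i) / Real.sqrt D) ℓ *
            ((∑ i, X ℓ i * v i) / Real.sqrt D)) ^ 2
    ∂tokenGaussian L D

/-- the population risk of the attention estimator depends on
`(k, v)` only through the seven overlaps `kᵀk*/D, vᵀv*/D, kᵀv*/D, vᵀk*/D,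
‖k‖²/D, ‖v‖²/D, kᵀv/D`: if two parameter pairs have the same overlaps, their
risks coincide. -/
theorem stmt16 (L D : ℕ) (hL : 1 ≤ L) (hD : 1 ≤ D)
    (g : Fin L → (Fin L → ℝ) → ℝ) (hg_meas : ∀ ε, Measurable (g ε))
    (σ : (Fin L → ℝ) → (Fin L → ℝ)) (hσ_meas : Measurable σ)
    (kstar vstar : Fin D → ℝ)
    (hk : ∑ i, kstar i ^ 2 = (D : ℝ)) (hv : ∑ i, vstar i ^ 2 = (D : ℝ))
    (hkv : ∑ i, kstar i * vstar i = 0)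
    (k v k' v' : Fin D → ℝ)
    (h1 : ∑ i, k i * kstar i = ∑ i, k' i * kstar i)
    (h2 : ∑ i, v i * vstar i = ∑ i, v' i * vstar i)
    (h3 : ∑ i, k i * vstar i = ∑ i, k' i * vstar i)
    (h4 : ∑ i, v i * kstar i = ∑ i, v' i * kstar i)
    (h5 : ∑ i, k i ^ 2 = ∑ i, k' i ^ 2)
    (h6 : ∑ i, v i ^ 2 = ∑ i, v' i ^ 2)
    (h7 : ∑ i, k i * v i = ∑ i, k' i * v' i) :
    attRisk L D g σ kstar vstar k v = attRisk L D g σ kstar vstar k' v' := by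
  classical
  set toE : (Fin D → ℝ) → EuclideanSpace ℝ (Fin D) := ⇑(WithLp.equiv 2 (Fin D → ℝ)).symm with htoE
  have hip : ∀ a b : Fin D → ℝ, ⟪toE a, toE b⟫ = ∑ i, a i * b i := by
    intro a b
    simp [toE, PiLp.inner_apply, RCLike.inner_apply, conj_trivial]
    exact Finset.sum_congr rfl fun i _ => mul_comm _ _
  set p : Fin 4 → (Fin D → ℝ) := ![kstar, vstar, k, v] with hp
  set p' : Fin 4 → (Fin D → ℝ) := ![kstar, vstar, k', v'] with hp'
  have h1' : ∑ i, kstar i * k i = ∑ i, kstar i * k' i := by simpa [mul_comm] using h1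
  have h2' : ∑ i, vstar i * v i = ∑ i, vstar i * v' i := by simpa [mul_comm] using h2
  have h3' : ∑ i, vstar i * k i = ∑ i, vstar i * k' i := by simpa [mul_comm] using h3
  have h4' : ∑ i, kstar i * v i = ∑ i, kstar i * v' i := by simpa [mul_comm] using h4
  have h5' : ∑ i, k i * k i = ∑ i, k' i * k' i := by simpa only [pow_two] using h5
  have h6' : ∑ i, v i * v i = ∑ i, v' i * v' i := by simpa only [pow_two] using h6
  have h7' : ∑ i, v i * k i = ∑ i, v' i * k' i := by simpa [mul_comm] using h7
  have gram : ∀ i j, ⟪toE (p i), toE (p j)⟫ = ⟪toE (p' i), toE (p' j)⟫ := by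
    intro i j
    rw [hip, hip]
    fin_cases i <;> fin_cases j <;>
      simp only [hp, hp', Matrix.cons_val_zero, Matrix.cons_val_one, Matrix.head_cons,
        Matrix.cons_val_two, Matrix.tail_cons, Matrix.cons_val_three, Matrix.head_fin_const] <;>
      first
        | rfl
        | exact h1 | exact h1' | exact h2 | exact h2' | exact h3 | exact h3'
        | exact h4 | exact h4' | exact h5' | exact h6' | exact h7 | exact h7'
  obtain ⟨T, hT⟩ := exists_isoequiv (fun j => toE (p j)) (fun j => toE (p' j)) gram
  set tE : (Fin D → ℝ) ≃ᵐ (Fin D → ℝ) :=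
    (MeasurableEquiv.toLp 2 (Fin D → ℝ)).trans
      ((T.toHomeomorph.toMeasurableEquiv).trans (MeasurableEquiv.toLp 2 (Fin D → ℝ)).symm)
    with htE
  have hcomm : ∀ x : Fin D → ℝ, toE (tE x) = T (toE x) := fun _ => rfl
  have key : ∀ (x : Fin D → ℝ) (j : Fin 4), ∑ i, tE x i * p' j i = ∑ i, x i * p j i := by
    intro x j
    have e1 : ∑ i, tE x i * p' j i = ⟪toE (tE x), toE (p' j)⟫ := (hip _ _).symm
    rw [e1, hcomm, ← hT j, LinearIsometryEquiv.inner_map_map, hip]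
  have hnormt : ∀ x : Fin D → ℝ, ∑ i, tE x i ^ 2 = ∑ i, x i ^ 2 := by
    intro x
    have e1 : ∑ i, tE x i ^ 2 = ⟪toE (tE x), toE (tE x)⟫ := by
      rw [hip]; exact Finset.sum_congr rfl fun i _ => pow_two _
    have e2 : ∑ i, x i ^ 2 = ⟪toE x, toE x⟫ := by
      rw [hip]; exact Finset.sum_congr rfl fun i _ => pow_two _
    rw [e1, e2, hcomm, LinearIsometryEquiv.inner_map_map]
  have mp_vol : MeasurePreserving tE (volume : Measure (Fin D → ℝ)) volume :=
    (EuclideanSpace.volume_preserving_symm_measurableEquiv_toLp (Fin D)).comp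
      ((T.measurePreserving).comp
        (EuclideanSpace.volume_preserving_symm_measurableEquiv_toLp (Fin D)).symm)
  have mp_vol' : MeasurePreserving tE (Measure.pi fun _ : Fin D => (volume : Measure ℝ))
      (Measure.pi fun _ : Fin D => (volume : Measure ℝ)) := by
    rw [← volume_pi]; exact mp_vol
  have mp_gauss := gauss_mp tE mp_vol' hnormt
  set ΦE : (Fin L → Fin D → ℝ) ≃ᵐ (Fin L → Fin D → ℝ) :=
    MeasurableEquiv.piCongrRight (fun _ : Fin L => tE) with hΦE
  have mp_Φ : MeasurePreserving ΦE (tokenGaussian L D) (tokenGaussian L D) := by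
    unfold tokenGaussian
    exact measurePreserving_pi _ _ (fun _ => mp_gauss)
  have hΦapp : ∀ (X : Fin L → Fin D → ℝ) (ℓ : Fin L), ΦE X ℓ = tE (X ℓ) := fun _ _ => rfl
  have k0 : ∀ x : Fin D → ℝ, ∑ i, tE x i * kstar i = ∑ i, x i * kstar i := by
    intro x; simpa [hp, hp'] using key x 0
  have k1 : ∀ x : Fin D → ℝ, ∑ i, tE x i * vstar i = ∑ i, x i * vstar i := by
    intro x; simpa [hp, hp'] using key x 1
  have k2 : ∀ x : Fin D → ℝ, ∑ i, tE x i * k' i = ∑ i, x i * k i := by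
    intro x; simpa [hp, hp'] using key x 2
  have k3 : ∀ x : Fin D → ℝ, ∑ i, tE x i * v' i = ∑ i, x i * v i := by
    intro x; simpa [hp, hp'] using key x 3
  unfold attRisk
  congr 1
  refine Finset.sum_congr rfl fun ε _ => ?_
  conv_rhs => rw [← mp_Φ.integral_comp ΦE.measurableEmbedding]
  refine integral_congr_ae (Filter.Eventually.of_forall fun X => ?_)
  simp only [hΦapp, k0, k1, k2, k3]
end
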